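/- The maximal game length of the ordered Zeckendorf game satisfies the refined upper bound M(n) ≤ n²/2 − (1/32)·n·log_φ(n) + o(n·log_φ(n)) as n → ∞; equivalently, for every ε > 0 there exists N such that for all n ≥ N, M(n) ≤ n²/2 − (1/32 − ε)·n·log_φ(n), where φ = (1+√5)/2 is the golden ratio. -/

import Mathlib

/-- Fibonacci numbers indexed so that `F 1 = 1`, `F 2 = 2`,
and `F (i+1) = F i + F (i-1)`. -/
def F (i : ℕ) : ℕ := Nat.fib (i + 1)

/-- A single legal move of the ordered Zeckendorf game, acting on an
adjacent pair of entries of the list of indices. -/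
inductive Move : List ℕ → List ℕ → Prop
  | merge (a b : List ℕ) (i : ℕ) (hi : 1 ≤ i) :
      Move (a ++ [i, i + 1] ++ b) (a ++ [i + 2] ++ b)
  | mergeOnes (a b : List ℕ) :
      Move (a ++ [1, 1] ++ b) (a ++ [2] ++ b)
  | split (a b : List ℕ) (i : ℕ) (hi : 2 < i) :
      Move (a ++ [i, i] ++ b) (a ++ [i - 2, i + 1] ++ b)
  | splitTwos (a b : List ℕ) :
      Move (a ++ [2, 2] ++ b) (a ++ [1, 3] ++ b)
  | switch (a b : List ℕ) (i j : ℕ) (hj : 1 ≤ j) (hij : j < i) :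
      Move (a ++ [i, j] ++ b) (a ++ [j, i] ++ b)

/-- A play of the ordered Zeckendorf game on `n` with `m` moves:
the initial state is `n` copies of `1`, and each step is a legal move. -/
def IsPlay (n : ℕ) (s : ℕ → List ℕ) (m : ℕ) : Prop :=
  s 0 = List.replicate n 1 ∧ ∀ t < m, Move (s t) (s (t + 1))

/-- A state is terminal if no legal move applies to it. -/
def Terminal (S : List ℕ) : Prop := ∀ T, ¬ Move S T

/-- The total Fibonacci value of a state. -/
def val (S : List ℕ) : ℕ := (S.map F).sum

/-- The monovariant `f(S) = Σ_{j=1}^k (k+1−j)·F_{i_j}` (here with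
`j` running over 0-based positions, so the weight of position `j` is
`k − j`). -/
def f (S : List ℕ) : ℕ := ∑ j : Fin S.length, (S.length - (j : ℕ)) * F (S.get j)

/-- `M n` is the maximal number of moves in a completed play of the
ordered Zeckendorf game on `n`. -/
noncomputable def M (n : ℕ) : ℕ :=
  sSup {m | ∃ s : ℕ → List ℕ, IsPlay n s m ∧ Terminal (s m)}

/-- The golden ratio `φ = (1+√5)/2`. -/
noncomputable def phi : ℝ := (1 + Real.sqrt 5) / 2

/-- Logarithm to base `φ`. -/
noncomputable def logphi (x : ℝ) : ℝ := Real.log x / Real.log phi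


-- ====== auxiliary development ======


lemma F_pos (i : ℕ) : 1 ≤ F i := Nat.fib_pos.mpr (Nat.succ_pos i)

lemma F_add_two (i : ℕ) : F (i + 2) = F (i + 1) + F i := by
  show Nat.fib (i + 3) = _
  rw [show i + 3 = (i + 1) + 2 by ring, Nat.fib_add_two]
  simp [F]; omega

lemma F_mono {i j : ℕ} (h : i ≤ j) : F i ≤ F j := Nat.fib_mono (by omega)

lemma F_lt {i j : ℕ} (hj : 1 ≤ j) (hij : j < i) : F j < F i :=
  lt_of_lt_of_le (Nat.fib_lt_fib_succ (n := j + 1) (by omega)) (Nat.fib_mono (by omega))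

def w : ℕ → ℕ
  | 0 => 0
  | 1 => 0
  | 2 => 0
  | (u + 3) => w (u + 2) + w (u + 1) + F (u + 1) - 1

lemma w_rec (i : ℕ) (hi : 1 ≤ i) : w (i + 2) + 1 = w (i + 1) + w i + F i := by
  obtain ⟨u, rfl⟩ : ∃ u, i = u + 1 := ⟨i - 1, by omega⟩
  have h := F_pos (u + 1)
  show w (u + 3) + 1 = w (u + 2) + w (u + 1) + F (u + 1)
  rw [w]
  omega

lemma w_step (j : ℕ) : w (j + 1) + w (j + 2) ≤ w (j + 3) := by
  have h := w_rec (j + 1) (by omega)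
  simp only [show j + 1 + 2 = j + 3 from rfl, show j + 1 + 1 = j + 2 from rfl] at h
  have h2 := F_pos (j + 1)
  omega

-- val lemmas
@[simp] lemma val_nil : val [] = 0 := rfl
@[simp] lemma val_cons (x : ℕ) (s : List ℕ) : val (x :: s) = F x + val s := by simp [val]
@[simp] lemma val_append (a b : List ℕ) : val (a ++ b) = val a + val b := by simp [val]

-- f lemmas
@[simp] lemma f_nil : f [] = 0 := by simp [f]

lemma f_cons (x : ℕ) (s : List ℕ) : f (x :: s) = (s.length + 1) * F x + f s := by
  simp only [f, List.length_cons]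
  rw [Fin.sum_univ_succ]
  simp [Nat.succ_sub_succ]

lemma f_append (a b : List ℕ) : f (a ++ b) = f a + b.length * val a + f b := by
  induction a with
  | nil => simp
  | cons x a ih =>
    simp only [List.cons_append, f_cons, ih, List.length_append, val_cons]
    ring

lemma f_ge_val (s : List ℕ) : val s ≤ f s := by
  induction s with
  | nil => simp
  | cons x s ih =>
    rw [f_cons, val_cons]
    have : F x ≤ (s.length + 1) * F x := Nat.le_mul_of_pos_left _ (by omega)
    omega
@[simp] lemma wsum_append (a b : List ℕ) :
    ((a ++ b).map w).sum = (a.map w).sum + (b.map w).sum := by simp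

lemma local_to_global (a b m m' : List ℕ) (hlen : m'.length ≤ m.length)
    (hval : val m' = val m)
    (hloc : f m' + (m'.map w).sum + 1 ≤ f m + (m.map w).sum) :
    f (a ++ m' ++ b) + ((a ++ m' ++ b).map w).sum + 1
      ≤ f (a ++ m ++ b) + ((a ++ m ++ b).map w).sum := by
  have e : ∀ x : List ℕ, f (a ++ x ++ b)
      = f a + (x.length + b.length) * val a + (f x + b.length * val x + f b) := by
    intro x
    rw [List.append_assoc, f_append, f_append, List.length_append]
  rw [e, e, hval]
  have h2 : (m'.length + b.length) * val a ≤ (m.length + b.length) * val a :=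
    Nat.mul_le_mul_right _ (by omega)
  simp only [wsum_append]
  omega

lemma hf2 (x y : ℕ) : f [x, y] = 2 * F x + F y := by
  simp [f_cons, f_nil]; try ring

lemma hf1 (x : ℕ) : f [x] = F x := by simp [f_cons]

lemma move_decrease {S T : List ℕ} (h : Move S T) :
    f T + (T.map w).sum + 1 ≤ f S + (S.map w).sum := by
  cases h with
  | merge a b i hi =>
    apply local_to_global _ _ _ _ (by simp)
    · simp only [val_cons, val_nil]
      have := F_add_two i
      omega
    · simp only [hf1, hf2, List.map_cons, List.map_nil, List.sum_cons, List.sum_nil]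
      have h1 := F_add_two i
      have h2 := w_rec i hi
      omega
  | mergeOnes a b =>
    apply local_to_global _ _ _ _ (by simp)
    · simp only [val_cons, val_nil]
      norm_num [F]
    · simp only [hf1, hf2, List.map_cons, List.map_nil, List.sum_cons, List.sum_nil]
      norm_num [F, w]
  | split a b i hi =>
    obtain ⟨j, rfl⟩ : ∃ j, i = j + 3 := ⟨i - 3, by omega⟩
    have e : j + 3 - 2 = j + 1 := by omega
    have e2 : j + 3 + 1 = j + 4 := rfl
    rw [e, e2]
    apply local_to_global _ _ _ _ (by simp)
    · simp only [val_cons, val_nil]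
      have h1 := F_add_two (j + 2)
      have h2 := F_add_two (j + 1)
      simp only [show j + 2 + 2 = j + 4 from rfl, show j + 2 + 1 = j + 3 from rfl,
        show j + 1 + 2 = j + 3 from rfl, show j + 1 + 1 = j + 2 from rfl] at h1 h2
      omega
    · simp only [hf1, hf2, List.map_cons, List.map_nil, List.sum_cons, List.sum_nil]
      have h1 := F_add_two (j + 2)
      have h2 := F_add_two (j + 1)
      have h3 := w_rec (j + 2) (by omega)
      have h4 := w_rec (j + 1) (by omega)
      have h5 := F_pos (j + 1)
      simp only [show j + 2 + 2 = j + 4 from rfl, show j + 2 + 1 = j + 3 from rfl,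
        show j + 1 + 2 = j + 3 from rfl, show j + 1 + 1 = j + 2 from rfl] at h1 h2 h3 h4
      omega
  | splitTwos a b =>
    apply local_to_global _ _ _ _ (by simp)
    · simp only [val_cons, val_nil]
      norm_num [F]
    · simp only [hf1, hf2, List.map_cons, List.map_nil, List.sum_cons, List.sum_nil]
      have : w 3 = 0 := by rw [show (3:ℕ) = 0 + 3 from rfl, w]; norm_num [F, w]
      norm_num [F, w, this]
  | switch a b i j hj hij =>
    apply local_to_global _ _ _ _ (by simp)
    · simp only [val_cons, val_nil]; omega
    · simp only [hf1, hf2, List.map_cons, List.map_nil, List.sum_cons, List.sum_nil]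
      have := F_lt hj hij
      omega
lemma move_val {S T : List ℕ} (h : Move S T) : val T = val S := by
  cases h with
  | merge a b i hi =>
    simp only [val_append, val_cons, val_nil]
    have := F_add_two i
    omega
  | mergeOnes a b => simp only [val_append, val_cons, val_nil]; norm_num [F]
  | split a b i hi =>
    obtain ⟨j, rfl⟩ : ∃ j, i = j + 3 := ⟨i - 3, by omega⟩
    rw [show j + 3 - 2 = j + 1 from by omega, show j + 3 + 1 = j + 4 from rfl]
    simp only [val_append, val_cons, val_nil]
    have h1 := F_add_two (j + 2)
    have h2 := F_add_two (j + 1)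
    simp only [show j + 2 + 2 = j + 4 from rfl, show j + 2 + 1 = j + 3 from rfl,
      show j + 1 + 2 = j + 3 from rfl, show j + 1 + 1 = j + 2 from rfl] at h1 h2
    omega
  | splitTwos a b => simp only [val_append, val_cons, val_nil]; norm_num [F]
  | switch a b i j hj hij => simp only [val_append, val_cons, val_nil]; omega

lemma move_one_le {S T : List ℕ} (h : Move S T) (hS : ∀ x ∈ S, 1 ≤ x) :
    ∀ x ∈ T, 1 ≤ x := by
  cases h with
  | merge a b i hi =>
    intro x hx
    simp only [List.mem_append, List.mem_cons] at hx
    rcases hx with (h1 | h2) | h4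
    · exact hS x (by simp [h1])
    · simp at h2; omega
    · exact hS x (by simp [h4])
  | mergeOnes a b =>
    intro x hx
    simp only [List.mem_append, List.mem_cons] at hx
    rcases hx with (h1 | h2) | h4
    · exact hS x (by simp [h1])
    · simp at h2; omega
    · exact hS x (by simp [h4])
  | split a b i hi =>
    intro x hx
    simp only [List.mem_append, List.mem_cons] at hx
    rcases hx with (h1 | h2) | h4
    · exact hS x (by simp [h1])
    · simp at h2; omega
    · exact hS x (by simp [h4])
  | splitTwos a b =>
    intro x hx
    simp only [List.mem_append, List.mem_cons] at hx
    rcases hx with (h1 | h2) | h4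
    · exact hS x (by simp [h1])
    · simp at h2; omega
    · exact hS x (by simp [h4])
  | switch a b i j hj hij =>
    intro x hx
    simp only [List.mem_append, List.mem_cons] at hx
    rcases hx with (h1 | h2) | h4
    · exact hS x (by simp [h1])
    · simp at h2; omega
    · exact hS x (by simp [h4])

lemma terminal_tail {x : ℕ} {S : List ℕ} (h : Terminal (x :: S)) : Terminal S := by
  intro T hT
  cases hT with
  | merge a b i hi =>
    exact h _ (by simpa using Move.merge (x :: a) b i hi)
  | mergeOnes a b =>
    exact h _ (by simpa using Move.mergeOnes (x :: a) b)
  | split a b i hi =>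
    exact h _ (by simpa using Move.split (x :: a) b i hi)
  | splitTwos a b =>
    exact h _ (by simpa using Move.splitTwos (x :: a) b)
  | switch a b i j hj hij =>
    exact h _ (by simpa using Move.switch (x :: a) b i j hj hij)

lemma terminal_pair {x y : ℕ} {S : List ℕ} (h : Terminal (x :: y :: S))
    (hx : 1 ≤ x) (hy : 1 ≤ y) : x + 2 ≤ y := by
  by_contra hc
  have hcase : y < x ∨ y = x ∨ y = x + 1 := by omega
  rcases hcase with h1 | h2 | h3
  · exact h _ (by simpa using Move.switch [] S x y hy h1)
  · subst h2
    have hx' : y = 1 ∨ y = 2 ∨ 2 < y := by omega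
    rcases hx' with rfl | rfl | hgt
    · exact h _ (by simpa using Move.mergeOnes [] S)
    · exact h _ (by simpa using Move.splitTwos [] S)
    · exact h _ (by simpa using Move.split [] S y hgt)
  · subst h3
    exact h _ (by simpa using Move.merge [] S x hx)

lemma terminal_chain {T : List ℕ} (h : Terminal T) (h1 : ∀ x ∈ T, 1 ≤ x) :
    T.Chain' (fun x y => x + 2 ≤ y) := by
  induction T with
  | nil => simp [List.Chain']
  | cons x rest ih =>
    cases rest with
    | nil => simp [List.Chain']
    | cons y rest' =>
      simp only [List.Chain', List.isChain_cons_cons]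
      refine ⟨terminal_pair h (h1 x (by simp)) (h1 y (by simp)), ?_⟩
      exact ih (terminal_tail h) (fun z hz => h1 z (by simp [hz]))

lemma val_lt_desc : ∀ L : List ℕ, L.Chain' (fun x y => y + 2 ≤ x) →
    (∀ x ∈ L, 1 ≤ x) → ∀ d, L.head? = some d → val L < F (d + 1) := by
  intro L
  induction L with
  | nil => intro _ _ d hd; simp at hd
  | cons e rest ih =>
    intro hc h1 d hd
    simp only [List.head?_cons, Option.some.injEq] at hd
    obtain rfl : d = e := hd.symm
    cases rest with
    | nil =>
      simp only [val_cons, val_nil, Nat.add_zero]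
      exact F_lt (h1 d (by simp)) (by omega)
    | cons e2 rest' =>
      simp only [List.Chain', List.isChain_cons_cons] at hc
      have he2 : 1 ≤ e2 := h1 e2 (by simp)
      have he1 : 1 ≤ d := h1 d (by simp)
      have ihv : val (e2 :: rest') < F (e2 + 1) :=
        ih hc.2 (fun z hz => h1 z (by simp [hz])) e2 rfl
      have hmono : F (e2 + 1) ≤ F (d - 1) := F_mono (by omega)
      have hFd : F (d + 1) = F d + F (d - 1) := by
        have h' := F_add_two (d - 1)
        rw [show d - 1 + 2 = d + 1 from by omega, show d - 1 + 1 = d from by omega] at h'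
        exact h'
      rw [val_cons]
      omega
lemma f_replicate (n : ℕ) : 2 * f (List.replicate n 1) = n * (n + 1) := by
  induction n with
  | zero => simp
  | succ k ih =>
    rw [List.replicate_succ, f_cons, List.length_replicate]
    have hF1 : F 1 = 1 := rfl
    rw [hF1]
    have e : (k + 1) * (k + 1 + 1) = k * (k + 1) + 2 * (k + 1) := by ring
    linarith

lemma wsum_replicate (n : ℕ) : ((List.replicate n 1).map w).sum = 0 := by
  simp [List.map_replicate, show w 1 = 0 from rfl]

lemma val_replicate (n : ℕ) : val (List.replicate n 1) = n := by
  simp [val, List.map_replicate, show F 1 = 1 from rfl]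

lemma play_main {n m : ℕ} (hn : 1 ≤ n) {s : ℕ → List ℕ} (hp : IsPlay n s m)
    (ht : Terminal (s m)) :
    ∃ d, n < F (d + 1) ∧ 2 * m + 2 * n + 2 * w d ≤ n * (n + 1) := by
  obtain ⟨h0, hmv⟩ := hp
  -- invariants
  have hone : ∀ t, t ≤ m → ∀ x ∈ s t, 1 ≤ x := by
    intro t
    induction t with
    | zero => intro _ x hx; rw [h0] at hx; simp at hx; omega
    | succ k ih =>
      intro hk x hx
      exact move_one_le (hmv k (by omega)) (ih (by omega)) x hx
  have hval : ∀ t, t ≤ m → val (s t) = n := by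
    intro t
    induction t with
    | zero => intro _; rw [h0, val_replicate]
    | succ k ih =>
      intro hk
      rw [move_val (hmv k (by omega)), ih (by omega)]
  have hmono : ∀ t, t ≤ m →
      f (s t) + ((s t).map w).sum + t ≤ f (s 0) + ((s 0).map w).sum := by
    intro t
    induction t with
    | zero => intro _; omega
    | succ k ih =>
      intro hk
      have h1 := move_decrease (hmv k (by omega))
      have h2 := ih (by omega)
      omega
  -- terminal state analysis
  set T := s m with hT
  have hvT : val T = n := hval m le_rfl
  have hTne : T ≠ [] := by
    intro he
    rw [he] at hvT
    simp at hvT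
    omega
  set d := T.getLast hTne with hd
  have hdmem : d ∈ T := List.getLast_mem hTne
  have honeT : ∀ x ∈ T, 1 ≤ x := hone m le_rfl
  -- chain and Zeckendorf bound
  have hchain : T.Chain' (fun x y => x + 2 ≤ y) := terminal_chain ht honeT
  have hrev : T.reverse.Chain' (fun x y => y + 2 ≤ x) := by
    simp only [List.Chain', List.isChain_reverse]
    exact hchain
  have hhead : T.reverse.head? = some d := by
    rw [List.head?_reverse]
    exact (List.getLast?_eq_getLast hTne).symm ▸ rfl
  have hzeck : val T.reverse < F (d + 1) :=
    val_lt_desc T.reverse hrev (fun x hx => honeT x (List.mem_reverse.mp hx)) d hhead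
  have hvrev : val T.reverse = val T := by
    simp [val, List.map_reverse, List.sum_reverse]
  have hnF : n < F (d + 1) := by rw [hvrev, hvT] at hzeck; exact hzeck
  -- potential bounds
  have hphi : w d ≤ (T.map w).sum :=
    List.single_le_sum (fun x _ => Nat.zero_le x) _ (List.mem_map_of_mem (f := w) hdmem)
  have hfT : n ≤ f T := hvT ▸ f_ge_val T
  have hm := hmono m le_rfl
  rw [h0, wsum_replicate] at hm
  have hm' : f T + (T.map w).sum + m ≤ f (List.replicate n 1) + 0 := by
    rw [hT]; exact hm
  have hf0 := f_replicate n
  exact ⟨d, hnF, by omega⟩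

lemma w_vals : w 3 = 0 ∧ w 4 = 1 ∧ w 5 = 3 ∧ w 6 = 8 ∧ w 7 = 18 ∧ w 8 = 38
    ∧ w 9 = 76 ∧ w 10 = 147 := by
  have h3 : w 3 = 0 := by rw [show (3:ℕ) = 0 + 3 from rfl, w]; decide
  have h4 : w 4 = 1 := by rw [show (4:ℕ) = 1 + 3 from rfl, w]; rw [h3]; decide
  have h5 : w 5 = 3 := by rw [show (5:ℕ) = 2 + 3 from rfl, w]; rw [h4, h3]; decide
  have h6 : w 6 = 8 := by rw [show (6:ℕ) = 3 + 3 from rfl, w]; rw [h5, h4]; decide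
  have h7 : w 7 = 18 := by rw [show (7:ℕ) = 4 + 3 from rfl, w]; rw [h6, h5]; decide
  have h8 : w 8 = 38 := by rw [show (8:ℕ) = 5 + 3 from rfl, w]; rw [h7, h6]; decide
  have h9 : w 9 = 76 := by rw [show (9:ℕ) = 6 + 3 from rfl, w]; rw [h8, h7]; decide
  have h10 : w 10 = 147 := by rw [show (10:ℕ) = 7 + 3 from rfl, w]; rw [h9, h8]; decide
  exact ⟨h3, h4, h5, h6, h7, h8, h9, h10⟩

lemma w_growth : ∀ u, 8 ≤ u → u * F u ≤ 8 * w u := by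
  intro u
  induction u using Nat.strong_induction_on with
  | _ u ih =>
    intro hu
    have hcase : u = 8 ∨ u = 9 ∨ u = 10 ∨ 11 ≤ u := by omega
    obtain ⟨h3, h4, h5, h6, h7, h8, h9, h10⟩ := w_vals
    rcases hcase with rfl | rfl | rfl | hbig
    · rw [h8, show F 8 = 34 from rfl]; norm_num
    · rw [h9, show F 9 = 55 from rfl]; norm_num
    · rw [h10, show F 10 = 89 from rfl]; norm_num
    · obtain ⟨v, rfl⟩ : ∃ v, u = v + 3 := ⟨u - 3, by omega⟩
      have h1 := ih (v + 2) (by omega) (by omega)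
      have h2 := ih (v + 1) (by omega) (by omega)
      have hrec := w_rec (v + 1) (by omega)
      simp only [show v + 1 + 2 = v + 3 from rfl, show v + 1 + 1 = v + 2 from rfl] at hrec
      have hF3 := F_add_two (v + 1)
      simp only [show v + 1 + 2 = v + 3 from rfl, show v + 1 + 1 = v + 2 from rfl] at hF3
      have hF2 := F_add_two v
      have hFm : F v ≤ F (v + 1) := F_mono (by omega)
      have hF1ge : 2 ≤ F (v + 1) := by
        have h22 : F 2 ≤ F (v + 1) := F_mono (by omega)
        have h2v : F 2 = 2 := rfl
        omega
      have e1 : (v + 3) * F (v + 3)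
          = (v + 2) * F (v + 2) + (v + 1) * F (v + 1) + (F (v + 2) + 2 * F (v + 1)) := by
        rw [hF3]; ring
      linarith [e1, h1, h2, hrec, hF2, hFm, hF1ge]
open goldenRatio in
lemma phi_eq : phi = Real.goldenRatio := rfl

lemma one_lt_phi : 1 < phi := by rw [phi_eq]; exact Real.one_lt_goldenRatio

lemma log_phi_pos : 0 < Real.log phi := Real.log_pos one_lt_phi

lemma phi_ge : (8:ℝ) / 5 ≤ phi := by
  rw [phi]
  have h : (11:ℝ) / 5 ≤ Real.sqrt 5 := by
    rw [Real.le_sqrt (by norm_num) (by norm_num)]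
    norm_num
  linarith

lemma phi_pos : 0 < phi := lt_trans one_pos one_lt_phi

lemma log_phi_ge : (3:ℝ) / 8 ≤ Real.log phi := by
  have hpos : 0 < phi := phi_pos
  have h1 : Real.log phi⁻¹ ≤ phi⁻¹ - 1 :=
    Real.log_le_sub_one_of_pos (by positivity)
  rw [Real.log_inv] at h1
  have h2 : phi⁻¹ ≤ (8 / 5 : ℝ)⁻¹ := inv_anti₀ (by norm_num) phi_ge
  have h3 : ((8:ℝ) / 5)⁻¹ = 5 / 8 := by norm_num
  rw [h3] at h2
  linarith

lemma fib_le_phi_pow : ∀ k : ℕ, (Nat.fib k : ℝ) ≤ phi ^ k := by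
  intro k
  induction k using Nat.strong_induction_on with
  | _ k ih =>
    match k with
    | 0 => simp
    | 1 => simpa using one_lt_phi.le
    | (k + 2) =>
      rw [Nat.fib_add_two]
      push_cast
      have h1 := ih k (by omega)
      have h2 := ih (k + 1) (by omega)
      have hsq : phi ^ (k + 2) = phi ^ k * (phi + 1) := by
        rw [phi_eq, ← Real.goldenRatio_sq]
        ring
      have hk1 : phi ^ (k + 1) = phi ^ k * phi := by ring
      have hpk : (0:ℝ) ≤ phi ^ k := pow_nonneg phi_pos.le k
      rw [hsq]
      rw [hk1] at h2
      linarith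


theorem stmt_16 :
    ∀ ε : ℝ, 0 < ε → ∃ N : ℕ, ∀ n : ℕ, N ≤ n →
      (M n : ℝ) ≤ (n : ℝ) ^ 2 / 2 - (1 / 32 - ε) * n * logphi n := by
  intro ε hε
  refine ⟨100, fun n hn => ?_⟩
  have hn1 : (1:ℕ) ≤ n := by omega
  have hnR : (100:ℝ) ≤ (n:ℝ) := by exact_mod_cast hn
  have hlogφ : 0 < Real.log phi := log_phi_pos
  have hlogn : 0 ≤ Real.log n := Real.log_nonneg (by linarith)
  set L : ℝ := logphi n with hLdef
  have hL0 : 0 ≤ L := by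
    rw [hLdef, logphi]
    exact div_nonneg hlogn hlogφ.le
  have hnL0 : 0 ≤ (n:ℝ) * L := by positivity
  -- key : every play length obeys the bound
  have key : ∀ m : ℕ, (∃ s : ℕ → List ℕ, IsPlay n s m ∧ Terminal (s m)) →
      (m:ℝ) ≤ (n : ℝ) ^ 2 / 2 - (1 / 32 - ε) * n * L := by
    intro m ⟨s, hp, ht⟩
    obtain ⟨d, hdF, hsum⟩ := play_main hn1 hp ht
    -- d is large
    have hd8 : 8 ≤ d := by
      by_contra hd
      have : F (d + 1) ≤ F 8 := F_mono (by omega)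
      have h34 : F 8 = 34 := rfl
      omega
    -- F d ≥ (n+1)/2
    have hFd2 : n + 1 ≤ 2 * F d := by
      have h1 : F (d + 1) = F d + F (d - 1) := by
        have h' := F_add_two (d - 1)
        rw [show d - 1 + 2 = d + 1 from by omega, show d - 1 + 1 = d from by omega] at h'
        exact h'
      have h2 : F (d - 1) ≤ F d := F_mono (by omega)
      omega
    -- L ≤ d + 2
    have hfibphi : (n:ℝ) ≤ phi ^ (d + 2) := by
      have h1 : (n:ℝ) < (Nat.fib (d + 2) : ℝ) := by
        exact_mod_cast hdF
      exact le_trans h1.le (fib_le_phi_pow (d + 2))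
    have hLd : L ≤ (d:ℝ) + 2 := by
      rw [hLdef, logphi, div_le_iff₀ hlogφ]
      calc Real.log n ≤ Real.log (phi ^ (d + 2)) :=
            Real.log_le_log (by linarith) hfibphi
      _ = ((d:ℝ) + 2) * Real.log phi := by
            rw [Real.log_pow]; push_cast; ring
    -- L ≥ 2
    have hL2 : 2 ≤ L := by
      rw [hLdef, logphi, le_div_iff₀ hlogφ]
      have hphi3 : phi ^ 2 ≤ (n:ℝ) := by
        rw [phi_eq, Real.goldenRatio_sq]
        have := Real.goldenRatio_lt_two
        linarith
      calc 2 * Real.log phi = Real.log (phi ^ 2) := by rw [Real.log_pow]; push_cast; ring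
      _ ≤ Real.log n := Real.log_le_log (pow_pos phi_pos 2) hphi3
    -- w d is large
    have hwd : (L - 2) * ((n:ℝ) / 2) ≤ 8 * (w d : ℝ) := by
      have h1 : (d:ℝ) * (F d : ℝ) ≤ 8 * (w d : ℝ) := by
        exact_mod_cast w_growth d hd8
      have h2 : (n:ℝ) / 2 ≤ (F d : ℝ) := by
        have : (n:ℝ) + 1 ≤ 2 * (F d : ℝ) := by exact_mod_cast hFd2
        linarith
      have h3 : L - 2 ≤ (d:ℝ) := by linarith
      calc (L - 2) * ((n:ℝ) / 2) ≤ (d:ℝ) * (F d : ℝ) := by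
            apply mul_le_mul h3 h2 (by positivity) (by positivity)
      _ ≤ 8 * (w d : ℝ) := h1
    -- main numeric bound
    have hsumR : 2 * (m:ℝ) + 2 * (n:ℝ) + 2 * (w d : ℝ) ≤ (n:ℝ) * ((n:ℝ) + 1) := by
      exact_mod_cast hsum
    have hcoef : (1 / 32 - ε) * (n:ℝ) * L ≤ (1 / 32) * ((n:ℝ) * L) := by
      calc (1 / 32 - ε) * (n:ℝ) * L = (1 / 32 - ε) * ((n:ℝ) * L) := by ring
      _ ≤ (1 / 32) * ((n:ℝ) * L) :=
            mul_le_mul_of_nonneg_right (by linarith) hnL0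
    have e : (L - 2) * ((n:ℝ) / 2) = ((n:ℝ) * L) / 2 - (n:ℝ) := by ring
    nlinarith [hsumR, hcoef, hwd, hnL0, hnR]
  -- take supremum
  by_cases hset : {m | ∃ s : ℕ → List ℕ, IsPlay n s m ∧ Terminal (s m)}.Nonempty
  · have hbdd : BddAbove {m | ∃ s : ℕ → List ℕ, IsPlay n s m ∧ Terminal (s m)} := by
      refine ⟨n * n, fun m hm => ?_⟩
      obtain ⟨s, hp, ht⟩ := hm
      obtain ⟨d, _, hsum⟩ := play_main hn1 hp ht
      have e : n * (n + 1) = n * n + n := by ring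
      omega
    have hmem := Nat.sSup_mem hset hbdd
    exact key _ hmem
  · have hMz : M n = 0 := by
      rw [Set.not_nonempty_iff_eq_empty] at hset
      rw [M, hset, csSup_empty]
      rfl
    rw [hMz]
    push_cast
    -- need 0 ≤ n^2/2 - (1/32 - ε) n L
    rcases le_or_gt (1 / 32 - ε) 0 with hc | hc
    · have : (1 / 32 - ε) * (n:ℝ) * L ≤ 0 := by
        have : (1 / 32 - ε) * ((n:ℝ) * L) ≤ 0 := mul_nonpos_of_nonpos_of_nonneg hc hnL0
        linarith [this, show (1 / 32 - ε) * (n:ℝ) * L = (1 / 32 - ε) * ((n:ℝ) * L) from by ring]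
      nlinarith [hnR]
    · have hlogub : Real.log n ≤ (n:ℝ) :=
        le_trans (Real.log_le_sub_one_of_pos (by linarith)) (by linarith)
      have hLub : L ≤ (8 / 3) * (n:ℝ) := by
        rw [hLdef, logphi, div_le_iff₀ hlogφ]
        have := log_phi_ge
        nlinarith [hnR]
      have h1 : (1 / 32 - ε) * (n:ℝ) * L ≤ (1 / 32) * ((n:ℝ) * L) := by
        calc (1 / 32 - ε) * (n:ℝ) * L = (1 / 32 - ε) * ((n:ℝ) * L) := by ring
        _ ≤ (1 / 32) * ((n:ℝ) * L) := mul_le_mul_of_nonneg_right (by linarith) hnL0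
      have h2 : (n:ℝ) * L ≤ (8 / 3) * (n:ℝ) * (n:ℝ) := by
        calc (n:ℝ) * L ≤ (n:ℝ) * ((8 / 3) * (n:ℝ)) :=
              mul_le_mul_of_nonneg_left hLub (by positivity)
        _ = (8 / 3) * (n:ℝ) * (n:ℝ) := by ring
      nlinarith [hnR]
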